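/- For every first-order formula φ(x, y; p₁, …, pₘ) in the language of E (one binary relation symbol, interpreted as inclusion) there is a natural number k, depending only on φ, with the following property: for every finite family 𝐑 of pairwise disjoint infinite computable subsets of ℕ with |𝐑| ≥ k and for every tuple (A₁, …, Aₘ) of c.e. sets, the relation {(X, Y) : X, Y ∈ 𝐑 and E ⊨ φ(X, Y; A₁, …, Aₘ)} is not a strict linear order on 𝐑 (that is, it is not simultaneously irreflexive, transitive, and such that any two distinct members of 𝐑 are comparable). -/

import Mathlib

open FirstOrder

/-- A set of natural numbers is computably enumerable if it is the domain of a
partial computable function. -/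
def CE (A : Set ℕ) : Prop := ∃ f : ℕ →. ℕ, Partrec f ∧ A = f.Dom

/-- A set of natural numbers is computable if its membership predicate is computable. -/
def IsComputableSet (A : Set ℕ) : Prop := ComputablePred (· ∈ A)

/-- The universe of the structure `E`: all c.e. subsets of `ℕ`. -/
def CESets : Type := {A : Set ℕ // CE A}

/-- The relation symbols of the language of `E`: a single binary relation
(interpreted as inclusion). -/
inductive incRel : ℕ → Type
  | inc : incRel 2

/-- The language of `E`, with one binary relation symbol. -/
def Linc : Language := ⟨fun _ => Empty, incRel⟩

/-- The structure `E`: c.e. sets with the binary relation interpreted as set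
inclusion. -/
instance EStructure : Linc.Structure CESets where
  funMap := fun f _ => f.elim
  RelMap | .inc => fun x => (x 0).val ⊆ (x 1).val


lemma ce_iff_re {A : Set ℕ} : CE A ↔ REPred (· ∈ A) := by
  constructor
  · rintro ⟨f, pf, rfl⟩
    exact pf.dom_re
  · intro hp
    refine ⟨fun a => (Part.assert (a ∈ A) fun _ => Part.some ()).map fun _ => 0, ?_, ?_⟩
    · exact hp.map (((Computable.const 0).comp Computable.fst).to₂)
    · ext a
      simp [PFun.Dom, Part.assert]

lemma ce_empty : CE (∅ : Set ℕ) := by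
  refine ⟨fun _ => Part.none, Partrec.none, ?_⟩
  ext a
  simp [PFun.Dom]

lemma ce_union {A B : Set ℕ} (hA : CE A) (hB : CE B) : CE (A ∪ B) := by
  obtain ⟨f, pf, rfl⟩ := hA
  obtain ⟨g, pg, rfl⟩ := hB
  obtain ⟨k, pk, hk⟩ := Partrec.merge' pf pg
  refine ⟨k, pk, ?_⟩
  ext a
  simp only [Set.mem_union, PFun.mem_dom]
  rw [← Part.dom_iff_mem, ← Part.dom_iff_mem, ← Part.dom_iff_mem]
  exact ((hk a).2).symm

lemma rePred_and {p q : ℕ → Prop} (hp : REPred p) (hq : REPred q) :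
    REPred fun a => p a ∧ q a := by
  have h : Partrec fun a =>
      (Part.assert (p a) fun _ => Part.some ()).bind fun _ =>
        Part.assert (q a) fun _ => Part.some () := by
    exact hp.bind ((hq.comp Computable.fst).to₂)
  refine h.of_eq fun a => ?_
  ext u
  simp [Part.assert, Part.mem_bind_iff, Part.mem_assert_iff]

lemma ce_inter_comp {A X : Set ℕ} (hA : CE A) (hX : IsComputableSet X) :
    CE (A ∩ X) := by
  rw [ce_iff_re] at hA ⊢
  exact (rePred_and hA hX.to_re).of_eq fun a => by simp [Set.mem_inter_iff]

lemma comp_compl {X : Set ℕ} (hX : IsComputableSet X) : IsComputableSet Xᶜ :=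
  hX.not.of_eq fun a => by simp

lemma comp_inter {X Y : Set ℕ} (hX : IsComputableSet X) (hY : IsComputableSet Y) :
    IsComputableSet (X ∩ Y) := by
  obtain ⟨f, cf, hf⟩ := ComputablePred.computable_iff.1 hX
  obtain ⟨g, cg, hg⟩ := ComputablePred.computable_iff.1 hY
  refine ComputablePred.computable_iff.2 ⟨fun a => f a && g a, ?_, ?_⟩
  · exact (Primrec.and.to_comp.comp cf cg)
  · funext a
    have h1 : (a ∈ X) = (f a : Prop) := congrFun hf a
    have h2 : (a ∈ Y) = (g a : Prop) := congrFun hg a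
    simp [Set.mem_inter_iff, h1, h2, Bool.and_eq_true]

lemma comp_union {X Y : Set ℕ} (hX : IsComputableSet X) (hY : IsComputableSet Y) :
    IsComputableSet (X ∪ Y) := by
  have := comp_compl (comp_inter (comp_compl hX) (comp_compl hY))
  exact this.of_eq fun a => by
    simp [Set.mem_union, Set.mem_inter_iff, Set.mem_compl_iff]
    tauto

lemma comp_ce {X : Set ℕ} (hX : IsComputableSet X) : CE X :=
  ce_iff_re.2 hX.to_re

open FirstOrder.Language

open FirstOrder.Language

instance prodStructure (M N : Type) [Linc.Structure M] [Linc.Structure N] :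
    Linc.Structure (M × N) where
  funMap := fun f _ => f.elim
  RelMap := fun r x =>
    Structure.RelMap r (fun i => (x i).1) ∧ Structure.RelMap r (fun i => (x i).2)

section Rect

variable {M N : Type} [Linc.Structure M] [Linc.Structure N]

lemma term_realize_fst {β : Type*} (t : Linc.Term β) (w : β → M × N) :
    (t.realize w).1 = t.realize (fun b => (w b).1) := by
  induction t with
  | var => rfl
  | func f _ _ => exact f.elim

lemma term_realize_snd {β : Type*} (t : Linc.Term β) (w : β → M × N) :
    (t.realize w).2 = t.realize (fun b => (w b).2) := by
  induction t with
  | var => rfl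
  | func f _ _ => exact f.elim


lemma realize_equal' {α : Type} {n : ℕ} (t u : Linc.Term (α ⊕ Fin n))
    (v : α → M × N) (xs : Fin n → M × N) :
    (BoundedFormula.equal t u).Realize v xs ↔
      t.realize (Sum.elim v xs) = u.realize (Sum.elim v xs) := Iff.rfl

lemma realize_equalM' {P : Type} [Linc.Structure P] {α : Type} {n : ℕ}
    (t u : Linc.Term (α ⊕ Fin n)) (v : α → P) (xs : Fin n → P) :
    (BoundedFormula.equal t u).Realize v xs ↔
      t.realize (Sum.elim v xs) = u.realize (Sum.elim v xs) := Iff.rfl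

lemma realize_rel' {P : Type} [Linc.Structure P] {α : Type} {n k : ℕ}
    (r : Linc.Relations k) (ts : Fin k → Linc.Term (α ⊕ Fin n))
    (v : α → P) (xs : Fin n → P) :
    (BoundedFormula.rel r ts).Realize v xs ↔
      Structure.RelMap r (fun i => (ts i).realize (Sum.elim v xs)) := Iff.rfl

/-- Semantics of a list of "rectangles". -/
def RealizeList {α : Type} {n : ℕ}
    (l : List (Linc.BoundedFormula α n × Linc.BoundedFormula α n))
    (v₁ : α → M) (xs₁ : Fin n → M) (v₂ : α → N) (xs₂ : Fin n → N) : Prop :=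
  ∃ p ∈ l, p.1.Realize v₁ xs₁ ∧ p.2.Realize v₂ xs₂

/-- Negation of a list of rectangles, as a list of rectangles. -/
def negList {α : Type} {n : ℕ} :
    List (Linc.BoundedFormula α n × Linc.BoundedFormula α n) →
      List (Linc.BoundedFormula α n × Linc.BoundedFormula α n)
  | [] => [(BoundedFormula.not ⊥, BoundedFormula.not ⊥)]
  | p :: t =>
      ((negList t).map fun q => (p.1.not ⊓ q.1, q.2)) ++
        ((negList t).map fun q => (q.1, p.2.not ⊓ q.2))

lemma realize_negList {α : Type} {n : ℕ}
    (l : List (Linc.BoundedFormula α n × Linc.BoundedFormula α n))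
    (v₁ : α → M) (xs₁ : Fin n → M) (v₂ : α → N) (xs₂ : Fin n → N) :
    RealizeList (negList l) v₁ xs₁ v₂ xs₂ ↔ ¬ RealizeList l v₁ xs₁ v₂ xs₂ := by
  induction l with
  | nil =>
      simp [RealizeList, negList, BoundedFormula.realize_not]
  | cons p t ih =>
      simp only [RealizeList, negList, List.mem_append, List.mem_map, List.mem_cons] at *
      constructor
      · rintro ⟨q, (⟨q', hq', rfl⟩ | ⟨q', hq', rfl⟩), hq1, hq2⟩
        · rw [BoundedFormula.realize_inf, BoundedFormula.realize_not] at hq1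
          rintro ⟨r, (rfl | hr), hr1, hr2⟩
          · exact hq1.1 hr1
          · exact ih.1 ⟨q', hq', hq1.2, hq2⟩ ⟨r, hr, hr1, hr2⟩
        · rw [BoundedFormula.realize_inf, BoundedFormula.realize_not] at hq2
          rintro ⟨r, (rfl | hr), hr1, hr2⟩
          · exact hq2.1 hr2
          · exact ih.1 ⟨q', hq', hq1, hq2.2⟩ ⟨r, hr, hr1, hr2⟩
      · intro h
        have hnt : ¬ ∃ p ∈ t, p.1.Realize v₁ xs₁ ∧ p.2.Realize v₂ xs₂ := by
          rintro ⟨r, hr, hr1, hr2⟩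
          exact h ⟨r, Or.inr hr, hr1, hr2⟩
        obtain ⟨q, hq, hq1, hq2⟩ := ih.2 hnt
        by_cases hp1 : p.1.Realize v₁ xs₁
        · have hp2 : ¬ p.2.Realize v₂ xs₂ := fun hp2 => h ⟨p, Or.inl rfl, hp1, hp2⟩
          refine ⟨(q.1, p.2.not ⊓ q.2), Or.inr ⟨q, hq, rfl⟩, hq1, ?_⟩
          rw [BoundedFormula.realize_inf, BoundedFormula.realize_not]
          exact ⟨hp2, hq2⟩
        · refine ⟨(p.1.not ⊓ q.1, q.2), Or.inl ⟨q, hq, rfl⟩, ?_, hq2⟩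
          rw [BoundedFormula.realize_inf, BoundedFormula.realize_not]
          exact ⟨hp1, hq1⟩


lemma realize_append {α : Type} {n : ℕ}
    (l₁ l₂ : List (Linc.BoundedFormula α n × Linc.BoundedFormula α n))
    (v₁ : α → M) (xs₁ : Fin n → M) (v₂ : α → N) (xs₂ : Fin n → N) :
    RealizeList (l₁ ++ l₂) v₁ xs₁ v₂ xs₂ ↔
      RealizeList l₁ v₁ xs₁ v₂ xs₂ ∨ RealizeList l₂ v₁ xs₁ v₂ xs₂ := by
  simp [RealizeList, List.mem_append, or_and_right, exists_or]

end Rect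

/-- The rectangle decomposition of a formula, as a list of pairs of formulas. -/
def rectList : ∀ {α : Type} {n : ℕ}, Linc.BoundedFormula α n →
    List (Linc.BoundedFormula α n × Linc.BoundedFormula α n)
  | _, _, .falsum => []
  | _, _, .equal t u => [(.equal t u, .equal t u)]
  | _, _, .rel r ts => [(.rel r ts, .rel r ts)]
  | _, _, .imp f g => negList (rectList f) ++ rectList g
  | _, _, .all f =>
      negList (((negList (rectList f)).map fun p => (p.1.ex, p.2.ex)))

theorem realize_rectList {M N : Type} [Linc.Structure M] [Linc.Structure N]
    {α : Type} {n : ℕ} (φ : Linc.BoundedFormula α n)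
    (v : α → M × N) (xs : Fin n → M × N) :
    φ.Realize v xs ↔
      RealizeList (rectList φ) (fun a => (v a).1) (fun i => (xs i).1)
        (fun a => (v a).2) (fun i => (xs i).2) := by
  induction φ with
  | falsum =>
      simp [RealizeList, rectList, BoundedFormula.Realize]
  | equal t u =>
      simp only [rectList, RealizeList, List.mem_singleton]
      rw [realize_equalM']
      constructor
      · intro h
        refine ⟨(.equal t u, .equal t u), rfl, ?_, ?_⟩
        · rw [realize_equalM']
          have e1 : (fun s => (Sum.elim v xs s).1) =
              Sum.elim (fun a => (v a).1) (fun i => (xs i).1) := by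
            funext s; cases s <;> rfl
          rw [← e1, ← term_realize_fst, ← term_realize_fst, h]
        · rw [realize_equalM']
          have e2 : (fun s => (Sum.elim v xs s).2) =
              Sum.elim (fun a => (v a).2) (fun i => (xs i).2) := by
            funext s; cases s <;> rfl
          rw [← e2, ← term_realize_snd, ← term_realize_snd, h]
      · rintro ⟨p, rfl, h1, h2⟩
        rw [realize_equalM'] at h1 h2
        have e1 : (fun s => (Sum.elim v xs s).1) =
            Sum.elim (fun a => (v a).1) (fun i => (xs i).1) := by
          funext s; cases s <;> rfl
        have e2 : (fun s => (Sum.elim v xs s).2) =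
            Sum.elim (fun a => (v a).2) (fun i => (xs i).2) := by
          funext s; cases s <;> rfl
        rw [← e1, ← term_realize_fst, ← term_realize_fst] at h1
        rw [← e2, ← term_realize_snd, ← term_realize_snd] at h2
        exact Prod.ext h1 h2
  | rel r ts =>
      simp only [rectList, RealizeList, List.mem_singleton]
      rw [realize_rel']
      have hprod : Structure.RelMap (M := M × N) r (fun i => (ts i).realize (Sum.elim v xs)) ↔
          (Structure.RelMap (M := M) r fun i => ((ts i).realize (Sum.elim v xs)).1) ∧
          (Structure.RelMap (M := N) r fun i => ((ts i).realize (Sum.elim v xs)).2) :=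
        Iff.rfl
      have e1 : (fun s => (Sum.elim v xs s).1) =
          Sum.elim (fun a => (v a).1) (fun i => (xs i).1) := by
        funext s; cases s <;> rfl
      have e2 : (fun s => (Sum.elim v xs s).2) =
          Sum.elim (fun a => (v a).2) (fun i => (xs i).2) := by
        funext s; cases s <;> rfl
      have hts1 : (fun i => ((ts i).realize (Sum.elim v xs)).1) =
          fun i => (ts i).realize (Sum.elim (fun a => (v a).1) fun i => (xs i).1) := by
        funext i; rw [term_realize_fst, e1]
      have hts2 : (fun i => ((ts i).realize (Sum.elim v xs)).2) =
          fun i => (ts i).realize (Sum.elim (fun a => (v a).2) fun i => (xs i).2) := by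
        funext i; rw [term_realize_snd, e2]
      constructor
      · intro h
        refine ⟨(.rel r ts, .rel r ts), rfl, ?_, ?_⟩
        · rw [realize_rel', ← hts1]; exact (hprod.1 h).1
        · rw [realize_rel', ← hts2]; exact (hprod.1 h).2
      · rintro ⟨p, rfl, h1, h2⟩
        rw [realize_rel'] at h1 h2
        refine hprod.2 ⟨?_, ?_⟩
        · rw [hts1]; exact h1
        · rw [hts2]; exact h2
  | imp f g ihf ihg =>
      rw [show rectList (f.imp g) = negList (rectList f) ++ rectList g from (by simp [rectList])]
      rw [BoundedFormula.realize_imp, ihf, ihg]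
      rw [realize_append, realize_negList]
      tauto
  | all f ihf =>
      rw [show rectList f.all =
        negList (((negList (rectList f)).map fun p => (p.1.ex, p.2.ex))) from (by simp [rectList])]
      rw [BoundedFormula.realize_all]
      rw [realize_negList]
      have hmap : RealizeList ((negList (rectList f)).map fun p => (p.1.ex, p.2.ex))
          (fun a => (v a).1) (fun i => (xs i).1) (fun a => (v a).2) (fun i => (xs i).2) ↔
          ∃ p ∈ negList (rectList f),
            (∃ a : M, p.1.Realize (fun a => (v a).1) (Fin.snoc (fun i => (xs i).1) a)) ∧
            (∃ b : N, p.2.Realize (fun a => (v a).2) (Fin.snoc (fun i => (xs i).2) b)) := by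
        simp only [RealizeList, List.mem_map]
        constructor
        · rintro ⟨q, ⟨p, hp, rfl⟩, h1, h2⟩
          rw [BoundedFormula.realize_ex] at h1
          rw [BoundedFormula.realize_ex] at h2
          exact ⟨p, hp, h1, h2⟩
        · rintro ⟨p, hp, h1, h2⟩
          refine ⟨(p.1.ex, p.2.ex), ⟨p, hp, rfl⟩, ?_, ?_⟩
          · rw [BoundedFormula.realize_ex]; exact h1
          · rw [BoundedFormula.realize_ex]; exact h2
      rw [hmap]
      constructor
      · intro h
        rintro ⟨p, hp, ⟨a, ha⟩, ⟨b, hb⟩⟩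
        have := h (a, b)
        rw [ihf] at this
        have hsn1 : (fun i => ((Fin.snoc xs (a, b) : Fin _ → M × N) i).1) =
            Fin.snoc (fun i => (xs i).1) a := by
          rw [show (fun i => ((Fin.snoc xs (a,b) : Fin _ → M × N) i).1) = Prod.fst ∘ (Fin.snoc xs (a,b) : Fin _ → M × N) from rfl,
            Fin.comp_snoc]
          rfl
        have hsn2 : (fun i => ((Fin.snoc xs (a, b) : Fin _ → M × N) i).2) =
            Fin.snoc (fun i => (xs i).2) b := by
          rw [show (fun i => ((Fin.snoc xs (a,b) : Fin _ → M × N) i).2) = Prod.snd ∘ (Fin.snoc xs (a,b) : Fin _ → M × N) from rfl,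
            Fin.comp_snoc]
          rfl
        rw [hsn1, hsn2] at this
        have hneg := (realize_negList (rectList f) (fun a => (v a).1)
          (Fin.snoc (fun i => (xs i).1) a) (fun a => (v a).2)
          (Fin.snoc (fun i => (xs i).2) b)).1 ⟨p, hp, ha, hb⟩
        exact hneg this
      · intro h x
        rw [ihf]
        have hsn1 : (fun i => ((Fin.snoc xs x : Fin _ → M × N) i).1) =
            Fin.snoc (fun i => (xs i).1) x.1 := by
          rw [show (fun i => ((Fin.snoc xs x : Fin _ → M × N) i).1) = Prod.fst ∘ (Fin.snoc xs x : Fin _ → M × N) from rfl,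
            Fin.comp_snoc]
          rfl
        have hsn2 : (fun i => ((Fin.snoc xs x : Fin _ → M × N) i).2) =
            Fin.snoc (fun i => (xs i).2) x.2 := by
          rw [show (fun i => ((Fin.snoc xs x : Fin _ → M × N) i).2) = Prod.snd ∘ (Fin.snoc xs x : Fin _ → M × N) from rfl,
            Fin.comp_snoc]
          rfl
        rw [hsn1, hsn2]
        by_contra hc
        have := (realize_negList (rectList f) (fun a => (v a).1)
          (Fin.snoc (fun i => (xs i).1) x.1) (fun a => (v a).2)
          (Fin.snoc (fun i => (xs i).2) x.2)).2 hc
        obtain ⟨p, hp, h1, h2⟩ := this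
        exact h ⟨p, hp, ⟨x.1, h1⟩, ⟨x.2, h2⟩⟩


def CEIn (S : Set ℕ) : Type := {A : Set ℕ // CE A ∧ A ⊆ S}

instance ceInStructure (S : Set ℕ) : Linc.Structure (CEIn S) where
  funMap := fun f _ => f.elim
  RelMap | .inc => fun x => (x 0).val ⊆ (x 1).val

instance (S : Set ℕ) : Linc.Structure {A : Set ℕ // CE A ∧ A ⊆ S} := ceInStructure S

def restr (S : Set ℕ) (hS : IsComputableSet S) (B : CESets) : CEIn S :=
  ⟨B.val ∩ S, ce_inter_comp B.2 hS, Set.inter_subset_right⟩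

lemma realize_rectList₀ {M N : Type} [Linc.Structure M] [Linc.Structure N]
    {α : Type} (φ : Linc.Formula α) (v : α → M × N) :
    φ.Realize v ↔
      ∃ p ∈ rectList φ, (Formula.Realize p.1 (fun a => (v a).1) ∧
        Formula.Realize p.2 (fun a => (v a).2)) := by
  have h := realize_rectList (M := M) (N := N) (n := 0) φ v default
  rw [show (Formula.Realize φ v) = BoundedFormula.Realize φ v default from rfl, h]
  refine exists_congr fun p => and_congr_right fun _ => and_congr ?_ ?_
  · rw [show (Formula.Realize p.1 (fun a => (v a).1)) =
      BoundedFormula.Realize p.1 (fun a => (v a).1) default from rfl]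
    rw [Subsingleton.elim (fun i => ((default : Fin 0 → M × N) i).1) (default : Fin 0 → M)]
  · rw [show (Formula.Realize p.2 (fun a => (v a).2)) =
      BoundedFormula.Realize p.2 (fun a => (v a).2) default from rfl]
    rw [Subsingleton.elim (fun i => ((default : Fin 0 → M × N) i).2) (default : Fin 0 → N)]

def decompose3 (X Y Z : Set ℕ) (hX : IsComputableSet X) (hY : IsComputableSet Y)
    (hZ : IsComputableSet Z) (hXY : X ∩ Y = ∅) (hXZ : X ∩ Z = ∅) (hYZ : Y ∩ Z = ∅)
    (hcover : X ∪ Y ∪ Z = Set.univ) :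
    CESets ≃[Linc] (CEIn X × CEIn Y × CEIn Z) where
  toFun := fun A => (restr X hX A, restr Y hY A, restr Z hZ A)
  invFun := fun p => ⟨p.1.val ∪ (p.2.1.val ∪ p.2.2.val),
    ce_union p.1.2.1 (ce_union p.2.1.2.1 p.2.2.2.1)⟩
  left_inv := by
    intro A
    apply Subtype.ext
    show A.val ∩ X ∪ (A.val ∩ Y ∪ A.val ∩ Z) = A.val
    rw [← Set.inter_union_distrib_left, ← Set.inter_union_distrib_left,
      ← Set.union_assoc, hcover, Set.inter_univ]
  right_inv := by
    rintro ⟨⟨B, hB⟩, ⟨C, hC⟩, ⟨D, hD⟩⟩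
    have hBX := hB.2; have hCY := hC.2; have hDZ := hD.2
    refine Prod.ext (Subtype.ext ?_) (Prod.ext (Subtype.ext ?_) (Subtype.ext ?_))
    · show (B ∪ (C ∪ D)) ∩ X = B
      ext a
      simp only [Set.mem_inter_iff, Set.mem_union]
      constructor
      · rintro ⟨h | h | h, hx⟩
        · exact h
        · exact absurd (show a ∈ X ∩ Y from ⟨hx, hCY h⟩) (by rw [hXY]; exact id)
        · exact absurd (show a ∈ X ∩ Z from ⟨hx, hDZ h⟩) (by rw [hXZ]; exact id)
      · intro h; exact ⟨Or.inl h, hBX h⟩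
    · show (B ∪ (C ∪ D)) ∩ Y = C
      ext a
      simp only [Set.mem_inter_iff, Set.mem_union]
      constructor
      · rintro ⟨h | h | h, hy⟩
        · exact absurd (show a ∈ X ∩ Y from ⟨hBX h, hy⟩) (by rw [hXY]; exact id)
        · exact h
        · exact absurd (show a ∈ Y ∩ Z from ⟨hy, hDZ h⟩) (by rw [hYZ]; exact id)
      · intro h; exact ⟨Or.inr (Or.inl h), hCY h⟩
    · show (B ∪ (C ∪ D)) ∩ Z = D
      ext a
      simp only [Set.mem_inter_iff, Set.mem_union]
      constructor
      · rintro ⟨h | h | h, hz⟩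
        · exact absurd (show a ∈ X ∩ Z from ⟨hBX h, hz⟩) (by rw [hXZ]; exact id)
        · exact absurd (show a ∈ Y ∩ Z from ⟨hCY h, hz⟩) (by rw [hYZ]; exact id)
        · exact h
      · intro h; exact ⟨Or.inr (Or.inr h), hDZ h⟩
  map_fun' := by intro n f; exact f.elim
  map_rel' := by
    intro n r x
    cases r
    show ((x 0).val ∩ X ⊆ (x 1).val ∩ X ∧
        ((x 0).val ∩ Y ⊆ (x 1).val ∩ Y ∧ (x 0).val ∩ Z ⊆ (x 1).val ∩ Z)) ↔
      (x 0).val ⊆ (x 1).val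
    constructor
    · rintro ⟨h1, h2, h3⟩ a ha
      have hu : a ∈ X ∪ Y ∪ Z := by rw [hcover]; trivial
      rcases hu with (h | h) | h
      · exact (h1 ⟨ha, h⟩).1
      · exact (h2 ⟨ha, h⟩).1
      · exact (h3 ⟨ha, h⟩).1
    · intro h
      exact ⟨Set.inter_subset_inter_left X h, Set.inter_subset_inter_left Y h,
        Set.inter_subset_inter_left Z h⟩

noncomputable def triList {α : Type} (φ : Linc.Formula α) :
    List (Linc.Formula α × Linc.Formula α × Linc.Formula α) :=
  (rectList φ).flatMap fun p => (rectList p.2).map fun q => (p.1, q.1, q.2)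

lemma realize_tri {α : Type} (φ : Linc.Formula α)
    (X Y Z : Set ℕ) (hX : IsComputableSet X) (hY : IsComputableSet Y)
    (hZ : IsComputableSet Z) (hXY : X ∩ Y = ∅) (hXZ : X ∩ Z = ∅) (hYZ : Y ∩ Z = ∅)
    (hcover : X ∪ Y ∪ Z = Set.univ) (v : α → CESets) :
    φ.Realize v ↔ ∃ t ∈ triList φ,
      (Formula.Realize t.1 (fun a => restr X hX (v a)) ∧
       Formula.Realize t.2.1 (fun a => restr Y hY (v a)) ∧
       Formula.Realize t.2.2 (fun a => restr Z hZ (v a))) := by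
  set g := decompose3 X Y Z hX hY hZ hXY hXZ hYZ hcover
  have h0 : φ.Realize v ↔ φ.Realize (g ∘ v) :=
    (StrongHomClass.realize_formula g φ).symm
  rw [h0, realize_rectList₀ (M := CEIn X) (N := CEIn Y × CEIn Z)]
  have key : ∀ p : Linc.Formula α × Linc.Formula α,
      Formula.Realize p.2 (fun a => ((g ∘ v) a).2) ↔
        ∃ q ∈ rectList p.2,
          (Formula.Realize q.1 (fun a => restr Y hY (v a)) ∧
           Formula.Realize q.2 (fun a => restr Z hZ (v a))) := by
    intro p
    exact realize_rectList₀ (M := CEIn Y) (N := CEIn Z) p.2 (fun a => ((g ∘ v) a).2)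
  constructor
  · rintro ⟨p, hp, h1, h2⟩
    obtain ⟨q, hq, hq1, hq2⟩ := (key p).1 h2
    refine ⟨(p.1, q.1, q.2), ?_, h1, hq1, hq2⟩
    simp only [triList, List.mem_flatMap, List.mem_map]
    exact ⟨p, hp, q, hq, rfl⟩
  · rintro ⟨t, ht, h1, h2, h3⟩
    simp only [triList, List.mem_flatMap, List.mem_map] at ht
    obtain ⟨p, hp, q, hq, rfl⟩ := ht
    exact ⟨p, hp, h1, (key p).2 ⟨q, hq, h2, h3⟩⟩

open Classical in
noncomputable def profile {m : ℕ} (φ : Linc.Formula (Fin (m + 2))) (A : Fin m → CESets)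
    (W : CESets) : Fin (triList φ).length → Bool × Bool :=
  if h : IsComputableSet W.val then
    fun i =>
      (decide (Formula.Realize ((triList φ).get i).1
          (Fin.cons ⟨W.val, W.2, subset_rfl⟩ (Fin.cons ⟨∅, ce_empty, Set.empty_subset _⟩
            (fun l => restr W.val h (A l))))),
       decide (Formula.Realize ((triList φ).get i).2.1
          (Fin.cons ⟨∅, ce_empty, Set.empty_subset _⟩ (Fin.cons ⟨W.val, W.2, subset_rfl⟩
            (fun l => restr W.val h (A l))))))
  else fun _ => (false, false)

/-- For every first-order formula `φ(x, y; p₁, …, pₘ)` in the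
language of `E` there is a number `k`, depending only on `φ`, such that for every
finite family `𝐑` of pairwise disjoint infinite computable sets with `|𝐑| ≥ k`
and all c.e. parameters, the relation defined by `φ` on `𝐑` is not a strict
linear order. -/
theorem stmt18 (m : ℕ) (φ : Linc.Formula (Fin (m + 2))) :
    ∃ k : ℕ, ∀ R : Finset CESets,
      (∀ X ∈ R, IsComputableSet X.val ∧ X.val.Infinite) →
      (∀ X ∈ R, ∀ Y ∈ R, X ≠ Y → X.val ∩ Y.val = ∅) →
      k ≤ R.card →
      ∀ A : Fin m → CESets,
        ¬ ((∀ X ∈ R, ¬ φ.Realize (Fin.cons X (Fin.cons X A))) ∧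
          (∀ X ∈ R, ∀ Y ∈ R, ∀ Z ∈ R,
            φ.Realize (Fin.cons X (Fin.cons Y A)) →
            φ.Realize (Fin.cons Y (Fin.cons Z A)) →
            φ.Realize (Fin.cons X (Fin.cons Z A))) ∧
          (∀ X ∈ R, ∀ Y ∈ R, X ≠ Y →
            φ.Realize (Fin.cons X (Fin.cons Y A)) ∨
            φ.Realize (Fin.cons Y (Fin.cons X A)))) := by
  classical
  refine ⟨4 ^ (triList φ).length + 1, ?_⟩
  intro R hcomp hdisj hk A
  rintro ⟨hirr, htrans, htot⟩
  -- pigeonhole on profiles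
  have hcard : (Finset.univ : Finset (Fin (triList φ).length → Bool × Bool)).card < R.card := by
    have : (Finset.univ : Finset (Fin (triList φ).length → Bool × Bool)).card =
        4 ^ (triList φ).length := by
      rw [Finset.card_univ, Fintype.card_fun]
      simp
    omega
  obtain ⟨Xa, ha, Xb, hb, hne, hprof⟩ :=
    Finset.exists_ne_map_eq_of_card_lt_of_maps_to hcard
      (fun (x : CESets) (_ : x ∈ R) => Finset.mem_univ (profile φ A x))
  -- notation
  have hXa : IsComputableSet Xa.val := (hcomp Xa ha).1
  have hXb : IsComputableSet Xb.val := (hcomp Xb hb).1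
  set Z : Set ℕ := Xa.valᶜ ∩ Xb.valᶜ with hZdef
  have hZ : IsComputableSet Z := comp_inter (comp_compl hXa) (comp_compl hXb)
  have hab : Xa.val ∩ Xb.val = ∅ := hdisj Xa ha Xb hb hne
  have hba : Xb.val ∩ Xa.val = ∅ := hdisj Xb hb Xa ha hne.symm
  have haZ : Xa.val ∩ Z = ∅ :=
    Set.eq_empty_iff_forall_notMem.2 fun t ht => ht.2.1 ht.1
  have hbZ : Xb.val ∩ Z = ∅ :=
    Set.eq_empty_iff_forall_notMem.2 fun t ht => ht.2.2 ht.1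
  have hcov1 : Xa.val ∪ Xb.val ∪ Z = Set.univ := by
    ext t
    simp only [hZdef, Set.mem_union, Set.mem_inter_iff, Set.mem_compl_iff, Set.mem_univ,
      iff_true]
    tauto
  have hcov2 : Xb.val ∪ Xa.val ∪ Z = Set.univ := by
    ext t
    simp only [hZdef, Set.mem_union, Set.mem_inter_iff, Set.mem_compl_iff, Set.mem_univ,
      iff_true]
    tauto
  -- tuple computation lemmas
  have tup1 : (fun a => restr Xa.val hXa ((Fin.cons Xa (Fin.cons Xb A) : Fin (m+2) → CESets) a)) =
      (Fin.cons (⟨Xa.val, Xa.2, subset_rfl⟩ : CEIn Xa.val)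
        (Fin.cons ⟨∅, ce_empty, Set.empty_subset _⟩ (fun l => restr Xa.val hXa (A l)))) := by
    funext i
    refine Fin.cases ?_ (fun j => ?_) i
    · simp only [Fin.cons_zero]
      exact Subtype.ext (Set.inter_self _)
    · refine Fin.cases ?_ (fun l => ?_) j
      · simp only [Fin.cons_succ, Fin.cons_zero]
        exact Subtype.ext hba
      · simp only [Fin.cons_succ]; rfl
  have tup2 : (fun a => restr Xb.val hXb ((Fin.cons Xa (Fin.cons Xb A) : Fin (m+2) → CESets) a)) =
      (Fin.cons (⟨∅, ce_empty, Set.empty_subset _⟩ : CEIn Xb.val)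
        (Fin.cons ⟨Xb.val, Xb.2, subset_rfl⟩ (fun l => restr Xb.val hXb (A l)))) := by
    funext i
    refine Fin.cases ?_ (fun j => ?_) i
    · simp only [Fin.cons_zero]
      exact Subtype.ext hab
    · refine Fin.cases ?_ (fun l => ?_) j
      · simp only [Fin.cons_succ, Fin.cons_zero]
        exact Subtype.ext (Set.inter_self _)
      · simp only [Fin.cons_succ]; rfl
  have tup3 : (fun a => restr Xb.val hXb ((Fin.cons Xb (Fin.cons Xa A) : Fin (m+2) → CESets) a)) =
      (Fin.cons (⟨Xb.val, Xb.2, subset_rfl⟩ : CEIn Xb.val)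
        (Fin.cons ⟨∅, ce_empty, Set.empty_subset _⟩ (fun l => restr Xb.val hXb (A l)))) := by
    funext i
    refine Fin.cases ?_ (fun j => ?_) i
    · simp only [Fin.cons_zero]
      exact Subtype.ext (Set.inter_self _)
    · refine Fin.cases ?_ (fun l => ?_) j
      · simp only [Fin.cons_succ, Fin.cons_zero]
        exact Subtype.ext hab
      · simp only [Fin.cons_succ]; rfl
  have tup4 : (fun a => restr Xa.val hXa ((Fin.cons Xb (Fin.cons Xa A) : Fin (m+2) → CESets) a)) =
      (Fin.cons (⟨∅, ce_empty, Set.empty_subset _⟩ : CEIn Xa.val)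
        (Fin.cons ⟨Xa.val, Xa.2, subset_rfl⟩ (fun l => restr Xa.val hXa (A l)))) := by
    funext i
    refine Fin.cases ?_ (fun j => ?_) i
    · simp only [Fin.cons_zero]
      exact Subtype.ext hba
    · refine Fin.cases ?_ (fun l => ?_) j
      · simp only [Fin.cons_succ, Fin.cons_zero]
        exact Subtype.ext (Set.inter_self _)
      · simp only [Fin.cons_succ]; rfl
  have tupZ1 : (fun a => restr Z hZ ((Fin.cons Xa (Fin.cons Xb A) : Fin (m+2) → CESets) a)) =
      (fun a => restr Z hZ ((Fin.cons Xb (Fin.cons Xa A) : Fin (m+2) → CESets) a)) := by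
    funext i
    refine Fin.cases ?_ (fun j => ?_) i
    · simp only [Fin.cons_zero]
      exact Subtype.ext (show Xa.val ∩ Z = Xb.val ∩ Z by rw [haZ, hbZ])
    · refine Fin.cases ?_ (fun l => ?_) j
      · simp only [Fin.cons_succ, Fin.cons_zero]
        exact Subtype.ext (show Xb.val ∩ Z = Xa.val ∩ Z by rw [haZ, hbZ])
      · simp only [Fin.cons_succ]
  -- the two evaluations
  have hEval1 := realize_tri φ Xa.val Xb.val Z hXa hXb hZ hab haZ hbZ hcov1
    (Fin.cons Xa (Fin.cons Xb A))
  have hEval2 := realize_tri φ Xb.val Xa.val Z hXb hXa hZ hba hbZ haZ hcov2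
    (Fin.cons Xb (Fin.cons Xa A))
  rw [tup1, tup2] at hEval1
  rw [tup3, tup4] at hEval2
  rw [tupZ1] at hEval1
  -- profile equality componentwise
  have hpk : ∀ t ∈ triList φ,
      (Formula.Realize t.1
        (Fin.cons (⟨Xa.val, Xa.2, subset_rfl⟩ : CEIn Xa.val)
          (Fin.cons ⟨∅, ce_empty, Set.empty_subset _⟩ (fun l => restr Xa.val hXa (A l)))) ↔
       Formula.Realize t.1
        (Fin.cons (⟨Xb.val, Xb.2, subset_rfl⟩ : CEIn Xb.val)
          (Fin.cons ⟨∅, ce_empty, Set.empty_subset _⟩ (fun l => restr Xb.val hXb (A l))))) ∧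
      (Formula.Realize t.2.1
        (Fin.cons (⟨∅, ce_empty, Set.empty_subset _⟩ : CEIn Xa.val)
          (Fin.cons ⟨Xa.val, Xa.2, subset_rfl⟩ (fun l => restr Xa.val hXa (A l)))) ↔
       Formula.Realize t.2.1
        (Fin.cons (⟨∅, ce_empty, Set.empty_subset _⟩ : CEIn Xb.val)
          (Fin.cons ⟨Xb.val, Xb.2, subset_rfl⟩ (fun l => restr Xb.val hXb (A l))))) := by
    intro t ht
    obtain ⟨i, hi⟩ := List.get_of_mem ht
    have h1 := congrFun hprof i
    rw [profile, profile, dif_pos hXa, dif_pos hXb] at h1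
    rw [← hi]
    constructor
    · have := congrArg Prod.fst h1
      exact decide_eq_decide.mp this
    · have := congrArg Prod.snd h1
      exact decide_eq_decide.mp this
  -- conclude the symmetry
  have hsym : φ.Realize (Fin.cons Xa (Fin.cons Xb A)) ↔
      φ.Realize (Fin.cons Xb (Fin.cons Xa A)) := by
    rw [hEval1, hEval2]
    constructor
    · rintro ⟨t, ht, h1, h2, h3⟩
      exact ⟨t, ht, ((hpk t ht).1).1 h1, ((hpk t ht).2).2 h2, h3⟩
    · rintro ⟨t, ht, h1, h2, h3⟩
      exact ⟨t, ht, ((hpk t ht).1).2 h1, ((hpk t ht).2).1 h2, h3⟩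
  -- contradiction with strict order
  have h1 : φ.Realize (Fin.cons Xa (Fin.cons Xb A)) := by
    rcases htot Xa ha Xb hb hne with h | h
    · exact h
    · exact hsym.2 h
  have h2 : φ.Realize (Fin.cons Xb (Fin.cons Xa A)) := hsym.1 h1
  exact hirr Xa ha (htrans Xa ha Xb hb Xa ha h1 h2)
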